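/- (Inherent Estimation Bias of ESMM) Let O, R, C, Ô, R̂, Ĉ be random variables on a probability space D with values in [0,1], satisfying: (i) calibration E[Ô] = E[O] and E[Ĉ] = E[C]; (ii) R̂ = Ĉ/Ô pointwise with Ô > 0 a.s.; (iii) Ô and Ĉ independent; (iv) the click-space conversion rate equals E[C]/E[O] and exceeds the exposure-space conversion rate: E[C]/E[O] > E[R]; (v) Ĉ/Ô and 1/Ô integrable, E[Ĉ] > 0. Then E[R̂] - E[R] > 0, i.e., the ESMM CVR estimate is biased upward. -/

import Mathlib

open MeasureTheory ProbabilityTheory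

/-- Inherent Estimation Bias of ESMM (Theorem 1 of the paper): under calibration of the
CTR and CTCVR estimates, independence of the two towers, `R̂ = Ĉ/Ô`, and the assumption
that the click-space conversion rate `E[C]/E[O]` exceeds the exposure-space rate `E[R]`,
the ESMM CVR estimate is biased upward: `E[R̂] - E[R] > 0`. -/
theorem stmt3 {Ω : Type*} [MeasureSpace Ω] [IsProbabilityMeasure (ℙ : Measure Ω)]
    (O R C Ohat Chat : Ω → ℝ)
    (hO01 : ∀ ω, O ω ∈ Set.Icc (0 : ℝ) 1) (hR01 : ∀ ω, R ω ∈ Set.Icc (0 : ℝ) 1)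
    (hC01 : ∀ ω, C ω ∈ Set.Icc (0 : ℝ) 1)
    (hOhat01 : ∀ ω, Ohat ω ∈ Set.Icc (0 : ℝ) 1) (hChat01 : ∀ ω, Chat ω ∈ Set.Icc (0 : ℝ) 1)
    -- (i) calibration
    (hcalO : (∫ ω, Ohat ω) = ∫ ω, O ω) (hcalC : (∫ ω, Chat ω) = ∫ ω, C ω)
    -- (ii) ratio form with positive denominator a.s.
    (hOhatpos : ∀ᵐ ω ∂ℙ, 0 < Ohat ω)
    -- (iii) independence of the two towers
    (hindep : IndepFun Ohat Chat ℙ)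
    -- (iv) click space conversion rate exceeds exposure space conversion rate
    (hclick : (∫ ω, C ω) / (∫ ω, O ω) > ∫ ω, R ω)
    -- (v) integrability and nondegeneracy
    (hratio : Integrable (fun ω => Chat ω / Ohat ω) ℙ)
    (hinv : Integrable (fun ω => 1 / Ohat ω) ℙ)
    (hChatpos : 0 < ∫ ω, Chat ω)
    (hRint : Integrable R ℙ) (hOint : Integrable O ℙ) (hCint : Integrable C ℙ)
    (hOhatint : Integrable Ohat ℙ) (hChatint : Integrable Chat ℙ) :
    (∫ ω, Chat ω / Ohat ω) - (∫ ω, R ω) > 0 := by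
  set a : ℝ := ∫ ω, Ohat ω with ha
  -- E[Ohat] > 0
  have hapos : 0 < a := by
    rw [ha, integral_pos_iff_support_of_nonneg_ae]
    · have hnull : ℙ {ω | ¬ 0 < Ohat ω} = 0 := ae_iff.mp hOhatpos
      have hcompl : ℙ (Function.support Ohat)ᶜ = 0 :=
        measure_mono_null (fun ω hω => by
          simp only [Set.mem_compl_iff, Function.mem_support, not_not] at hω
          simp [hω]) hnull
      have hle := measure_union_le (μ := ℙ) (Function.support Ohat)
        (Function.support Ohat)ᶜ
      rw [Set.union_compl_self, measure_univ, hcompl, add_zero] at hle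
      exact lt_of_lt_of_le (by norm_num) hle
    · filter_upwards [hOhatpos] with ω h using le_of_lt h
    · exact hOhatint
  -- independence of Chat and 1/Ohat
  have hindep2 : IndepFun Chat (fun ω => 1 / Ohat ω) ℙ := by
    have := hindep.symm.comp (φ := id) (ψ := fun x : ℝ => 1 / x) measurable_id
      (measurable_const.div measurable_id)
    simpa [Function.comp_def] using this
  -- factorize the integral
  have hfact : (∫ ω, Chat ω / Ohat ω) = (∫ ω, Chat ω) * ∫ ω, 1 / Ohat ω := by
    have := hindep2.integral_fun_mul_eq_mul_integral hChatint.aestronglyMeasurable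
      hinv.aestronglyMeasurable
    simpa [div_eq_mul_inv, one_div] using this
  -- Jensen-type bound: E[1/Ohat] ≥ 1/E[Ohat] via tangent line at a
  have hjensen : 1 / a ≤ ∫ ω, 1 / Ohat ω := by
    have hmono : (∫ ω, (2 / a - Ohat ω / a ^ 2)) ≤ ∫ ω, 1 / Ohat ω := by
      apply integral_mono_ae
      · exact (integrable_const _).sub (hOhatint.div_const _)
      · exact hinv
      · filter_upwards [hOhatpos] with ω h
        have key : 0 ≤ (Ohat ω - a) ^ 2 / (a ^ 2 * Ohat ω) :=
          div_nonneg (sq_nonneg _) (by positivity)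
        have heq : 1 / Ohat ω - (2 / a - Ohat ω / a ^ 2)
            = (Ohat ω - a) ^ 2 / (a ^ 2 * Ohat ω) := by
          field_simp
          ring
        linarith [heq ▸ key]
    have hval : (∫ ω, (2 / a - Ohat ω / a ^ 2)) = 1 / a := by
      rw [integral_sub (integrable_const _) (hOhatint.div_const _),
        integral_const, integral_div, ← ha]
      simp
      field_simp
      ring
    linarith [hval ▸ hmono]
  have hlow : (∫ ω, C ω) / (∫ ω, O ω) ≤ ∫ ω, Chat ω / Ohat ω := by
    rw [hfact, ← hcalC, ← hcalO, div_eq_mul_inv, ← one_div]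
    exact mul_le_mul_of_nonneg_left hjensen (le_of_lt hChatpos)
  linarith
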